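/- Let T be a four-dimensional vector space over a field k of characteristic 0, let (·|·) be a nondegenerate symmetric bilinear form on T, let Φ : T × T × T × T → k be a nonzero alternating multilinear map, and define the triple product [···] on T by the condition ([xyz]|t) = Φ(x,y,z,t) for all x,y,z,t ∈ T. Then (T, [···]) is a simple null orthogonal triple system. -/

import Mathlib

set_option linter.unusedSectionVars false
set_option linter.unusedVariables false
set_option maxHeartbeats 1000000

/-- A null orthogonal triple system: a trilinear product with `[xyy] = 0 = [yyx]` such
that the maps `d_{x,y} = [xy·]` are derivations of the product. -/
def IsNullOTS (k : Type*) {T : Type*} [Field k] [AddCommGroup T] [Module k T]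
    (tp : T →ₗ[k] T →ₗ[k] T →ₗ[k] T) : Prop :=
  (∀ x y : T, tp x y y = 0) ∧
  (∀ x y : T, tp y y x = 0) ∧
  (∀ x y u v w : T, tp x y (tp u v w) =
      tp (tp x y u) v w + tp u (tp x y v) w + tp u v (tp x y w))

/-- A null orthogonal triple system is simple if `[TTT] ≠ 0` and it has no proper nonzero
ideal, an ideal being a subspace `I` with `[TTI] ⊆ I`. -/
def IsSimpleNullOTS (k : Type*) {T : Type*} [Field k] [AddCommGroup T] [Module k T]
    (tp : T →ₗ[k] T →ₗ[k] T →ₗ[k] T) : Prop :=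
  (∃ x y z : T, tp x y z ≠ 0) ∧
  ∀ I : Submodule k T, (∀ x y z : T, z ∈ I → tp x y z ∈ I) → I = ⊥ ∨ I = ⊤


open Module Function

section Aux

variable {k T : Type*} [Field k] [CharZero k] [AddCommGroup T] [Module k T]
  [FiniteDimensional k T]

lemma aux_eq_of_B (B : T →ₗ[k] T →ₗ[k] k)
    (hnondeg : ∀ x : T, (∀ y : T, B x y = 0) → x = 0) {a b : T}
    (h : ∀ t : T, B a t = B b t) : a = b := by
  have : a - b = 0 := hnondeg _ (fun y => by rw [map_sub, LinearMap.sub_apply, h, sub_self])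
  exact sub_eq_zero.mp this

lemma aux_B_ne_zero (B : T →ₗ[k] T →ₗ[k] k)
    (hnondeg : ∀ x : T, (∀ y : T, B x y = 0) → x = 0) {z : T} (hz : z ≠ 0) :
    ∃ u, B z u ≠ 0 := by
  by_contra h
  push_neg at h
  exact hz (hnondeg z h)

lemma aux_B_surj (hdim : Module.finrank k T = 4) (B : T →ₗ[k] T →ₗ[k] k)
    (hnondeg : ∀ x : T, (∀ y : T, B x y = 0) → x = 0) (φ : T →ₗ[k] k) :
    ∃ s : T, B s = φ := by
  have hker : LinearMap.ker B = ⊥ := by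
    rw [LinearMap.ker_eq_bot']
    intro m hm
    exact hnondeg m (fun y => by rw [hm]; rfl)
  have hsurj : Function.Surjective B :=
    (LinearMap.injective_iff_surjective_of_finrank_eq_finrank
      (Subspace.dual_finrank_eq (K := k) (V := T)).symm).mp (LinearMap.ker_eq_bot.mp hker)
  exact hsurj φ

lemma aux_finrank_ker (hdim : Module.finrank k T = 4) (B : T →ₗ[k] T →ₗ[k] k)
    (hnondeg : ∀ x : T, (∀ y : T, B x y = 0) → x = 0) {z : T} (hz : z ≠ 0) :
    finrank k (LinearMap.ker (B z)) = 3 := by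
  obtain ⟨u, hu⟩ := aux_B_ne_zero B hnondeg hz
  have hsurj : Function.Surjective (B z) := by
    intro c
    refine ⟨(c / B z u) • u, ?_⟩
    rw [map_smul, smul_eq_mul, div_mul_cancel₀]
    exact hu
  have h := LinearMap.finrank_range_add_finrank_ker (B z)
  rw [LinearMap.range_eq_top.mpr hsurj, finrank_top, finrank_self, hdim] at h
  omega

lemma aux_ker_eq_span (B : T →ₗ[k] T →ₗ[k] k)
    (hnondeg : ∀ x : T, (∀ y : T, B x y = 0) → x = 0) {z z' : T} (hz : z ≠ 0)
    (h : LinearMap.ker (B z) = LinearMap.ker (B z')) : z' ∈ Submodule.span k {z} := by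
  obtain ⟨u, hu⟩ := aux_B_ne_zero B hnondeg hz
  set c := B z' u / B z u with hc
  have key : ∀ x : T, B z' x = c * B z x := by
    intro x
    have hker : x - (B z x / B z u) • u ∈ LinearMap.ker (B z) := by
      rw [LinearMap.mem_ker, map_sub, map_smul, smul_eq_mul, div_mul_cancel₀ _ hu, sub_self]
    rw [h, LinearMap.mem_ker, map_sub, map_smul, smul_eq_mul, sub_eq_zero] at hker
    rw [hker, hc]
    field_simp
  have : z' - c • z = 0 := by
    apply hnondeg
    intro y
    rw [map_sub, map_smul, LinearMap.sub_apply, LinearMap.smul_apply, smul_eq_mul, key, sub_self]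
  rw [sub_eq_zero] at this
  rw [this]
  exact Submodule.smul_mem _ c (Submodule.mem_span_singleton_self z)

end Aux

section Aux2

variable {k T : Type*} [Field k] [CharZero k] [AddCommGroup T] [Module k T]
  [FiniteDimensional k T]

/-- Key derivation identity: for a `B`-skew operator `D`, the Leibniz-type sum over the
four slots of `Φ` vanishes. -/
lemma aux_sum_zero (hdim : Module.finrank k T = 4) (B : T →ₗ[k] T →ₗ[k] k)
    (hsymm : ∀ x y : T, B x y = B y x)
    (hnondeg : ∀ x : T, (∀ y : T, B x y = 0) → x = 0)
    (Φ : AlternatingMap k T k (Fin 4)) (D : T →ₗ[k] T)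
    (hskew : ∀ z t : T, B (D z) t = - B z (D t)) (v : Fin 4 → T) :
    ∑ l : Fin 4, Φ (Function.update v l (D (v l))) = 0 := by
  classical
  let M : Fin 4 → MultilinearMap k (fun _ : Fin 4 => T) k := fun l =>
    Φ.toMultilinearMap.compLinearMap (Function.update (fun _ => (LinearMap.id : T →ₗ[k] T)) l D)
  have hM : ∀ (l : Fin 4) (v : Fin 4 → T), M l v = Φ (Function.update v l (D (v l))) := by
    intro l v
    have harg : (fun i => (Function.update (fun _ => (LinearMap.id : T →ₗ[k] T)) l D) i (v i))
        = Function.update v l (D (v l)) := by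
      funext i
      by_cases h : i = l
      · subst h; simp
      · simp [Function.update_of_ne h]
    simp only [M, MultilinearMap.compLinearMap_apply, harg]
    rfl
  let S : MultilinearMap k (fun _ : Fin 4 => T) k := ∑ l, M l
  have hS : ∀ v : Fin 4 → T, S v = ∑ l : Fin 4, Φ (Function.update v l (D (v l))) := by
    intro v
    simp only [S, MultilinearMap.sum_apply]
    exact Finset.sum_congr rfl fun l _ => hM l v
  have halt : ∀ (v : Fin 4 → T) (i j : Fin 4), v i = v j → i ≠ j → S v = 0 := by
    intro v i j hv hij
    rw [hS]
    have key : ∀ l ∈ Finset.univ, l ∉ ({i, j} : Finset (Fin 4)) →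
        Φ (Function.update v l (D (v l))) = 0 := by
      intro l _ hl
      simp only [Finset.mem_insert, Finset.mem_singleton, not_or] at hl
      refine Φ.map_eq_zero_of_eq _ ?_ hij
      rw [Function.update_of_ne (Ne.symm hl.1), Function.update_of_ne (Ne.symm hl.2)]
      exact hv
    rw [← Finset.sum_subset (Finset.subset_univ ({i, j} : Finset (Fin 4))) key,
      Finset.sum_pair hij]
    have swapeq : Function.update v i (D (v i)) =
        (Function.update v j (D (v j))) ∘ Equiv.swap i j := by
      funext m
      rcases eq_or_ne m i with rfl | hmi
      · rw [Function.update_self, Function.comp_apply, Equiv.swap_apply_left,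
          Function.update_self, hv]
      · rcases eq_or_ne m j with rfl | hmj
        · rw [Function.update_of_ne hmi, Function.comp_apply, Equiv.swap_apply_right,
            Function.update_of_ne hij]
          exact hv.symm
        · rw [Function.update_of_ne hmi, Function.comp_apply,
            Equiv.swap_apply_of_ne_of_ne hmi hmj, Function.update_of_ne hmj]
    rw [swapeq, Φ.map_swap _ hij]
    exact neg_add_cancel _
  let Salt : AlternatingMap k T k (Fin 4) := { S with map_eq_zero_of_eq' := halt }
  -- orthogonal basis for B
  haveI : Invertible (2 : k) := invertibleOfNonzero two_ne_zero
  obtain ⟨e0, he0⟩ := LinearMap.BilinForm.exists_orthogonal_basis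
    (B := B) (LinearMap.isSymm_def.mpr (fun x y => (hsymm x y : _)))
  let e : Basis (Fin 4) k T := e0.reindex (finCongr hdim)
  have he : ∀ i j : Fin 4, i ≠ j → B (e i) (e j) = 0 := by
    intro i j hij
    have hne : (finCongr hdim).symm i ≠ (finCongr hdim).symm j :=
      fun h => hij (by simpa using congrArg (finCongr hdim) h)
    have h := he0 hne
    simpa [e, Basis.reindex_apply, LinearMap.BilinForm.IsOrtho, Function.onFun] using h
  have hee : ∀ i : Fin 4, B (e i) (e i) ≠ 0 := by
    intro i h
    apply e.ne_zero i
    apply hnondeg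
    intro y
    have : B (e i) = 0 := by
      apply Basis.ext e
      intro j
      rcases eq_or_ne i j with rfl | hij
      · simpa using h
      · simpa using he i j hij
    rw [this]; rfl
  have hexp : ∀ (i : Fin 4) (w : T), Φ (Function.update (⇑e) i w) = e.repr w i • Φ ⇑e := by
    intro i w
    conv_lhs => rw [← e.sum_repr w]
    rw [Φ.map_update_sum]
    rw [Finset.sum_eq_single i]
    · rw [Φ.map_update_smul, Function.update_eq_self]
    · intro j _ hji
      rw [Φ.map_update_smul]
      have : Φ (Function.update (⇑e) i (e j)) = 0 := by
        refine Φ.map_eq_zero_of_eq _ ?_ (Ne.symm hji)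
        rw [Function.update_self, Function.update_of_ne hji]
      rw [this, smul_zero]
    · intro h; exact absurd (Finset.mem_univ i) h
  have hrep : ∀ i : Fin 4, e.repr (D (e i)) i = 0 := by
    intro i
    have h1 : B (D (e i)) (e i) = 0 := by
      have h := hskew (e i) (e i)
      rw [hsymm (e i) (D (e i))] at h
      have h2 : (2 : k) * (B (D (e i)) (e i)) = 0 := by linear_combination h
      exact (mul_eq_zero.mp h2).resolve_left two_ne_zero
    have h2 : B (D (e i)) (e i) = e.repr (D (e i)) i * B (e i) (e i) := by
      conv_lhs => rw [← e.sum_repr (D (e i))]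
      rw [map_sum, LinearMap.coe_sum, Finset.sum_apply]
      rw [Finset.sum_eq_single i]
      · rw [map_smul, LinearMap.smul_apply, smul_eq_mul]
      · intro j _ hji
        rw [map_smul, LinearMap.smul_apply, smul_eq_mul, he j i hji, mul_zero]
      · intro h; exact absurd (Finset.mem_univ i) h
    rw [h1] at h2
    exact (mul_eq_zero.mp h2.symm).resolve_right (hee i)
  have hSe : Salt ⇑e = 0 := by
    have : Salt ⇑e = S ⇑e := rfl
    rw [this, hS]
    refine Finset.sum_eq_zero fun i _ => ?_
    rw [hexp i (D (e i)), hrep i, zero_smul]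
  have hfinal : Salt = 0 := by
    have h := Salt.eq_smul_basis_det e
    rw [hSe, zero_smul] at h
    exact h
  have : Salt v = 0 := by rw [hfinal]; rfl
  rw [← hS v]
  exact this

end Aux2

section Aux3

variable {k T : Type*} [Field k] [CharZero k] [AddCommGroup T] [Module k T]
  [FiniteDimensional k T]

lemma aux_basis_val_ne_zero (Φ : AlternatingMap k T k (Fin 4)) (hΦ : Φ ≠ 0)
    (g : Basis (Fin 4) k T) : Φ ⇑g ≠ 0 :=
  (AlternatingMap.map_basis_ne_zero_iff g Φ).mpr hΦ

lemma aux_exists_basis_pair (hdim : Module.finrank k T = 4) {z s : T}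
    (hz : z ≠ 0) (hs : s ∉ Submodule.span k {z}) :
    ∃ g : Basis (Fin 4) k T, g 2 = z ∧ g 3 = s := by
  have hsz : s ≠ z := fun h => hs (by rw [h]; exact Submodule.mem_span_singleton_self z)
  have li1 : LinearIndepOn k id ({z} : Set T) :=
    (linearIndepOn_singleton_iff k).mpr hz
  have hsnot : s ∉ ({z} : Set T) := by simpa using hsz
  have li : LinearIndepOn k id (insert s {z} : Set T) := by
    rw [linearIndepOn_insert hsnot]
    exact ⟨li1, by simpa using hs⟩
  let b0 := Basis.extend li
  have hzmem : z ∈ li.extend (Set.subset_univ _) :=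
    li.subset_extend _ (by simp)
  have hsmem : s ∈ li.extend (Set.subset_univ _) :=
    li.subset_extend _ (by simp)
  let e4 : (li.extend (Set.subset_univ _)) ≃ Fin 4 :=
    b0.indexEquiv ((Module.finBasis k T).reindex (finCongr hdim))
  let f0 : Basis (Fin 4) k T := b0.reindex e4
  have hf0 : ∀ x (hx : x ∈ li.extend (Set.subset_univ _)), f0 (e4 ⟨x, hx⟩) = x := by
    intro x hx
    simp only [f0, Basis.reindex_apply, Equiv.symm_apply_apply, b0]
    exact Basis.extend_apply_self li ⟨x, hx⟩
  set a : Fin 4 := e4 ⟨z, hzmem⟩ with ha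
  set b : Fin 4 := e4 ⟨s, hsmem⟩ with hb
  have hab : a ≠ b := by
    intro h
    exact hsz (by simpa using congrArg Subtype.val (e4.injective h.symm))
  set c : Fin 4 := Equiv.swap (2 : Fin 4) a b with hc
  have hc2 : c ≠ 2 := by
    intro h
    apply hab
    have : Equiv.swap (2 : Fin 4) a c = Equiv.swap (2 : Fin 4) a 2 := by rw [h]
    exact (by simpa [hc, Equiv.swap_apply_left] using this : b = a).symm
  let τ : Equiv.Perm (Fin 4) := (Equiv.swap 3 c).trans (Equiv.swap 2 a)
  have hτ2 : τ 2 = a := by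
    simp only [τ, Equiv.trans_apply]
    rw [Equiv.swap_apply_of_ne_of_ne (by decide) (Ne.symm hc2), Equiv.swap_apply_left]
  have hτ3 : τ 3 = b := by
    simp only [τ, Equiv.trans_apply]
    rw [Equiv.swap_apply_left, hc, Equiv.swap_apply_self]
  refine ⟨f0.reindex τ.symm, ?_, ?_⟩
  · rw [Basis.reindex_apply, Equiv.symm_symm, hτ2]; exact hf0 z hzmem
  · rw [Basis.reindex_apply, Equiv.symm_symm, hτ3]; exact hf0 s hsmem

lemma aux_claimC (hdim : Module.finrank k T = 4) (Φ : AlternatingMap k T k (Fin 4))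
    (hΦ : Φ ≠ 0) {z s : T} (hz : z ≠ 0) (hs : s ∉ Submodule.span k {z}) :
    ∃ x y : T, Φ ![x, y, z, s] ≠ 0 := by
  obtain ⟨g, hg2, hg3⟩ := aux_exists_basis_pair hdim hz hs
  refine ⟨g 0, g 1, ?_⟩
  have hv : ![g 0, g 1, z, s] = ⇑g := by
    funext i
    fin_cases i
    · rfl
    · rfl
    · exact hg2.symm
    · exact hg3.symm
  rw [hv]
  exact aux_basis_val_ne_zero Φ hΦ g

end Aux3

section Aux4

variable {k T : Type*} [Field k] [CharZero k] [AddCommGroup T] [Module k T]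
  [FiniteDimensional k T]

lemma aux_ideal_perp (hdim : Module.finrank k T = 4)
    (B : T →ₗ[k] T →ₗ[k] k) (hsymm : ∀ x y : T, B x y = B y x)
    (hnondeg : ∀ x : T, (∀ y : T, B x y = 0) → x = 0)
    (Φ : AlternatingMap k T k (Fin 4)) (hΦ : Φ ≠ 0)
    (tp : T →ₗ[k] T →ₗ[k] T →ₗ[k] T)
    (hdef : ∀ x y z t : T, B (tp x y z) t = Φ ![x, y, z, t])
    (I : Submodule k T) (hI : ∀ x y z : T, z ∈ I → tp x y z ∈ I)
    {z : T} (hzI : z ∈ I) (hz : z ≠ 0) {t : T} (hzt : B z t = 0) : t ∈ I := by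
  by_contra ht
  have h1 : (Submodule.Quotient.mk t : T ⧸ I) ≠ 0 := by
    simpa [Submodule.Quotient.mk_eq_zero] using ht
  obtain ⟨ψ, hψ⟩ : ∃ ψ : Module.Dual k (T ⧸ I), ψ (Submodule.Quotient.mk t) ≠ 0 := by
    by_contra h
    push_neg at h
    exact h1 ((Module.forall_dual_apply_eq_zero_iff k _).mp h)
  set φ : T →ₗ[k] k := ψ.comp I.mkQ with hφ
  obtain ⟨s, hsφ⟩ := aux_B_surj hdim B hnondeg φ
  have hφt : φ t ≠ 0 := hψ
  have hvan : ∀ x y : T, Φ ![x, y, z, s] = 0 := by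
    intro x y
    have h2 : φ (tp x y z) = 0 := by
      have : I.mkQ (tp x y z) = 0 := (Submodule.Quotient.mk_eq_zero I).mpr (hI x y z hzI)
      rw [hφ, LinearMap.comp_apply, this, map_zero]
    rw [← hdef x y z s, hsymm, hsφ]
    exact h2
  by_cases hs : s ∈ Submodule.span k {z}
  · obtain ⟨c, hcz⟩ := Submodule.mem_span_singleton.mp hs
    apply hφt
    rw [← hsφ, ← hcz, map_smul, LinearMap.smul_apply, hzt, smul_zero]
  · obtain ⟨x, y, hxy⟩ := aux_claimC hdim Φ hΦ hz hs
    exact hxy (hvan x y)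

end Aux4

section Main

variable {k T : Type*} [Field k] [CharZero k] [AddCommGroup T] [Module k T]
  [FiniteDimensional k T]

lemma aux_upd0 (a b c d x : T) :
    Function.update ![a, b, c, d] (0 : Fin 4) x = ![x, b, c, d] := by
  funext i; fin_cases i <;> simp [Function.update]

lemma aux_upd1 (a b c d x : T) :
    Function.update ![a, b, c, d] (1 : Fin 4) x = ![a, x, c, d] := by
  funext i; fin_cases i <;> simp [Function.update]

lemma aux_upd2 (a b c d x : T) :
    Function.update ![a, b, c, d] (2 : Fin 4) x = ![a, b, x, d] := by
  funext i; fin_cases i <;> simp [Function.update]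

lemma aux_upd3 (a b c d x : T) :
    Function.update ![a, b, c, d] (3 : Fin 4) x = ![a, b, c, x] := by
  funext i; fin_cases i <;> simp [Function.update]

theorem test_main (hdim : Module.finrank k T = 4)
    (B : T →ₗ[k] T →ₗ[k] k) (hsymm : ∀ x y : T, B x y = B y x)
    (hnondeg : ∀ x : T, (∀ y : T, B x y = 0) → x = 0)
    (Φ : AlternatingMap k T k (Fin 4)) (hΦ : Φ ≠ 0)
    (tp : T →ₗ[k] T →ₗ[k] T →ₗ[k] T)
    (hdef : ∀ x y z t : T, B (tp x y z) t = Φ ![x, y, z, t]) :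
    IsNullOTS k tp ∧ IsSimpleNullOTS k tp := by
  have heq : ∀ a b : T, (∀ t : T, B a t = B b t) → a = b := fun a b h =>
    aux_eq_of_B B hnondeg h
  have hskew : ∀ x y z t : T, B (tp x y z) t = - B z (tp x y t) := by
    intro x y z t
    have hswap : ![x, y, z, t] ∘ Equiv.swap 2 3 = ![x, y, t, z] := by
      funext i; fin_cases i <;> simp [Equiv.swap_apply_def]
    rw [hdef, hsymm z (tp x y t), hdef, ← hswap, Φ.map_swap _ (by decide : (2 : Fin 4) ≠ 3),
      neg_neg]
  constructor
  · refine ⟨?_, ?_, ?_⟩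
    · intro x y
      apply heq _ 0
      intro t
      rw [hdef, map_zero, LinearMap.zero_apply]
      exact Φ.map_eq_zero_of_eq _ (show ![x, y, y, t] 1 = ![x, y, y, t] 2 from rfl)
        (by decide : (1 : Fin 4) ≠ 2)
    · intro x y
      apply heq _ 0
      intro t
      rw [hdef, map_zero, LinearMap.zero_apply]
      exact Φ.map_eq_zero_of_eq _ (show ![y, y, x, t] 0 = ![y, y, x, t] 1 from rfl)
        (by decide : (0 : Fin 4) ≠ 1)
    · intro x y u v w
      apply heq
      intro t
      have main := aux_sum_zero hdim B hsymm hnondeg Φ (tp x y)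
        (fun z t => hskew x y z t) ![u, v, w, t]
      rw [Fin.sum_univ_four] at main
      simp only [Matrix.cons_val_zero, Matrix.cons_val_one, Matrix.head_cons,
        Matrix.cons_val_two, Matrix.tail_cons, Matrix.cons_val_three] at main
      rw [aux_upd0, aux_upd1, aux_upd2, aux_upd3] at main
      have lhs : B (tp x y (tp u v w)) t = - Φ ![u, v, w, tp x y t] := by
        rw [hskew x y (tp u v w) t, hdef]
      have rhs : B (tp (tp x y u) v w + tp u (tp x y v) w + tp u v (tp x y w)) t =
          Φ ![tp x y u, v, w, t] + Φ ![u, tp x y v, w, t] + Φ ![u, v, tp x y w, t] := by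
        rw [map_add, map_add, LinearMap.add_apply, LinearMap.add_apply, hdef, hdef, hdef]
      rw [lhs, rhs]
      linear_combination -main
  · constructor
    · obtain ⟨v, hv⟩ : ∃ v : Fin 4 → T, Φ v ≠ 0 := by
        by_contra h
        push_neg at h
        exact hΦ (AlternatingMap.ext h)
      refine ⟨v 0, v 1, v 2, ?_⟩
      intro h0
      have hveq : ![v 0, v 1, v 2, v 3] = v := by funext i; fin_cases i <;> rfl
      have := hdef (v 0) (v 1) (v 2) (v 3)
      rw [h0, map_zero, LinearMap.zero_apply, hveq] at this
      exact hv this.symm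
    · intro I hI
      by_cases hbot : I = ⊥
      · exact Or.inl hbot
      right
      obtain ⟨z, hzI, hz⟩ := I.ne_bot_iff.mp hbot
      have hKz : LinearMap.ker (B z) ≤ I := fun t ht =>
        aux_ideal_perp hdim B hsymm hnondeg Φ hΦ tp hdef I hI hzI hz (LinearMap.mem_ker.mp ht)
      have h3 : finrank k (LinearMap.ker (B z)) = 3 := aux_finrank_ker hdim B hnondeg hz
      have hnotle : ¬ (LinearMap.ker (B z) ≤ Submodule.span k {z}) := by
        intro hle
        have h1 := Submodule.finrank_mono hle
        rw [h3, finrank_span_singleton hz] at h1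
        omega
      obtain ⟨z', hz'k, hz's⟩ := SetLike.not_le_iff_exists.mp hnotle
      have hz'0 : z' ≠ 0 := fun h => hz's (h ▸ Submodule.zero_mem _)
      have hz'I : z' ∈ I := hKz hz'k
      have hKz' : LinearMap.ker (B z') ≤ I := fun t ht =>
        aux_ideal_perp hdim B hsymm hnondeg Φ hΦ tp hdef I hI hz'I hz'0 (LinearMap.mem_ker.mp ht)
      have hkerne : LinearMap.ker (B z) ≠ LinearMap.ker (B z') := fun h =>
        hz's (aux_ker_eq_span B hnondeg hz h)
      have h3' : finrank k (LinearMap.ker (B z')) = 3 := aux_finrank_ker hdim B hnondeg hz'0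
      have hlt : LinearMap.ker (B z) < LinearMap.ker (B z) ⊔ LinearMap.ker (B z') := by
        refine lt_of_le_of_ne le_sup_left ?_
        intro h
        have hle : LinearMap.ker (B z') ≤ LinearMap.ker (B z) := h ▸ le_sup_right
        exact hkerne (Submodule.eq_of_le_of_finrank_eq hle (by rw [h3, h3'])).symm
      have h4 : finrank k ↥(LinearMap.ker (B z) ⊔ LinearMap.ker (B z')) = 4 := by
        have hlt2 := Submodule.finrank_lt_finrank_of_lt hlt
        have hle4 : finrank k ↥(LinearMap.ker (B z) ⊔ LinearMap.ker (B z')) ≤ 4 :=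
          hdim ▸ Submodule.finrank_le _
        omega
      have htop : LinearMap.ker (B z) ⊔ LinearMap.ker (B z') = ⊤ :=
        Submodule.eq_top_of_finrank_eq (by rw [h4, hdim])
      rw [eq_top_iff, ← htop]
      exact sup_le hKz hKz'

end Main

/-- On a four-dimensional space `T` over a field of characteristic 0,
with a nondegenerate symmetric bilinear form `B` and a nonzero alternating 4-linear map
`Φ`, the triple product defined by `([xyz]|t) = Φ(x,y,z,t)` makes `T` a simple null
orthogonal triple system. -/
theorem nullOTS_of_alternating_four_form (k T : Type*) [Field k] [CharZero k]
    [AddCommGroup T] [Module k T] [FiniteDimensional k T]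
    (hdim : Module.finrank k T = 4)
    (B : T →ₗ[k] T →ₗ[k] k) (hsymm : ∀ x y : T, B x y = B y x)
    (hnondeg : ∀ x : T, (∀ y : T, B x y = 0) → x = 0)
    (Φ : AlternatingMap k T k (Fin 4)) (hΦ : Φ ≠ 0)
    (tp : T →ₗ[k] T →ₗ[k] T →ₗ[k] T)
    (hdef : ∀ x y z t : T, B (tp x y z) t = Φ ![x, y, z, t]) :
    IsNullOTS k tp ∧ IsSimpleNullOTS k tp :=
  test_main hdim B hsymm hnondeg Φ hΦ tp hdef
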